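/- Let α : X → ℝ be continuous and define C : X → SL(2,ℝ) by C(x) = R_{−π α(T x)} A(x) R_{π α(x)}. If g̃ is a family of lifts for A, then g̃_C(x, y) := g̃(x, y + α(x)) − α(T x) defines a family of lifts for C, whose iterates satisfy G̃_{x,C,n}(y) = G̃_{x,A,n}(y + α(x)) − α(Tⁿ x) for all x ∈ X, y ∈ ℝ, n ≥ 1; consequently, for every x ∈ X and ρ ∈ ℝ, if lim_{n→∞} G̃_{x,A,n}(z)/n = ρ for every z ∈ ℝ, then lim_{n→∞} G̃_{x,C,n}(y)/n = ρ for every y ∈ ℝ. -/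

import Mathlib

open MeasureTheory Topology Filter

noncomputable section

/-- The real projective line, as the projectivization of `ℝ²`. -/
abbrev RP1 : Type := Projectivization ℝ (Fin 2 → ℝ)

instance : TopologicalSpace RP1 :=
  inferInstanceAs (TopologicalSpace (Quotient (projectivizationSetoid ℝ (Fin 2 → ℝ))))

abbrev SL2 : Type := Matrix.SpecialLinearGroup (Fin 2) ℝ

instance : TopologicalSpace SL2 :=
  TopologicalSpace.induced (fun A : SL2 => (A : Matrix (Fin 2) (Fin 2) ℝ)) inferInstance

/-- The action of `SL(2,ℝ)` on `ℝP¹`: `A · span v = span (A v)`. -/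
def SL2act (A : SL2) (p : RP1) : RP1 :=
  Projectivization.map ((A : Matrix (Fin 2) (Fin 2) ℝ).mulVecLin)
    (by
      rw [Matrix.coe_mulVecLin]
      exact Matrix.mulVec_injective_iff_isUnit.2
        ((Matrix.isUnit_iff_isUnit_det _).2 (by simp))) p

/-- The covering map `π : ℝ → ℝP¹`, `π(y) = span (cos(πy), sin(πy))`. -/
def RP1proj (y : ℝ) : RP1 :=
  Projectivization.mk ℝ ![Real.cos (Real.pi * y), Real.sin (Real.pi * y)] (by
    intro h
    have h0 : Real.cos (Real.pi * y) = 0 := by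
      have := congrFun h 0; simpa using this
    have h1 : Real.sin (Real.pi * y) = 0 := by
      have := congrFun h 1; simpa using this
    nlinarith [Real.sin_sq_add_cos_sq (Real.pi * y)])

/-- An invariant section of the cocycle `(T, A)`. -/
def IsInvariantSection {X : Type*} [TopologicalSpace X] (T : X ≃ₜ X) (A : X → SL2)
    (d : C(X, RP1)) : Prop :=
  ∀ x, SL2act (A x) (d x) = d (T x)

/-- A (continuous, commuting with the deck transformation) family of lifts for the projective
action of `A`. -/
def IsLiftFamily {X : Type*} [TopologicalSpace X] (A : X → SL2) (g : X → ℝ → ℝ) : Prop :=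
  Continuous (fun p : X × ℝ => g p.1 p.2) ∧
    (∀ x y, RP1proj (g x y) = SL2act (A x) (RP1proj y)) ∧
    ∀ x y, g x (y + 1) = g x y + 1

/-- Iterates of a family of lifts: `G̃_{x,n} = g̃(T^{n-1}x, ·) ∘ ⋯ ∘ g̃(x, ·)`. -/
def liftIter {X : Type*} (T : X → X) (g : X → ℝ → ℝ) : ℕ → X → ℝ → ℝ
  | 0, _, y => y
  | n + 1, x, y => liftIter T g n (T x) (g x y)

/-- The rotation matrix `R_θ` as an element of `SL(2,ℝ)`. -/
def rotSL2 (θ : ℝ) : SL2 :=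
  ⟨!![Real.cos θ, -Real.sin θ; Real.sin θ, Real.cos θ], by
    simp [Matrix.det_fin_two_of]
    nlinarith [Real.sin_sq_add_cos_sq θ]⟩

lemma SL2act_inj (M : SL2) : Function.Injective (M : Matrix (Fin 2) (Fin 2) ℝ).mulVecLin := by
  rw [Matrix.coe_mulVecLin]
  exact Matrix.mulVec_injective_iff_isUnit.2
    ((Matrix.isUnit_iff_isUnit_det _).2 (by simp))

lemma SL2act_mk (M : SL2) (v : Fin 2 → ℝ) (hv : v ≠ 0) :
    SL2act M (Projectivization.mk ℝ v hv) =
    Projectivization.mk ℝ ((M : Matrix (Fin 2) (Fin 2) ℝ).mulVec v)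
      (fun h => hv (SL2act_inj M (by simpa [Matrix.mulVecLin] using h))) := by
  unfold SL2act
  rw [Projectivization.map_mk]
  simp [Matrix.mulVecLin]

lemma SL2act_mul (M N : SL2) (p : RP1) : SL2act (M * N) p = SL2act M (SL2act N p) := by
  induction p using Projectivization.ind with
  | h v hv =>
    rw [SL2act_mk, SL2act_mk, SL2act_mk]
    congr 1
    rw [Matrix.SpecialLinearGroup.coe_mul, Matrix.mulVec_mulVec]

lemma rot_proj (t y : ℝ) : SL2act (rotSL2 (Real.pi * t)) (RP1proj y) = RP1proj (y + t) := by
  unfold RP1proj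
  rw [SL2act_mk]
  congr 1
  funext i
  fin_cases i <;>
    simp [rotSL2, Matrix.mulVec, dotProduct, mul_add, Real.cos_add, Real.sin_add] <;>
    ring

/-- Conjugating a cocycle by rotations `C(x) = R_{-πα(Tx)} A(x) R_{πα(x)}`
transforms a family of lifts `g̃` for `A` into the family of lifts
`g̃_C(x,y) = g̃(x, y + α(x)) - α(Tx)` for `C`; the iterates transform accordingly, and the
fiberwise rotation number is unchanged. -/
theorem lift_family_conjugated_by_rotations
    {X : Type*} [MetricSpace X] [CompactSpace X]
    (T : X ≃ₜ X)
    (A : X → SL2) (hA : Continuous A)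
    (α : X → ℝ) (hα : Continuous α)
    (C : X → SL2)
    (hC : ∀ x, C x = rotSL2 (-(Real.pi * α (T x))) * A x * rotSL2 (Real.pi * α x))
    (g : X → ℝ → ℝ) (hg : IsLiftFamily A g)
    (gC : X → ℝ → ℝ)
    (hgC : ∀ x y, gC x y = g x (y + α x) - α (T x)) :
    IsLiftFamily C gC ∧
      (∀ (x : X) (y : ℝ) (n : ℕ), 1 ≤ n →
        liftIter (⇑T) gC n x y = liftIter (⇑T) g n x (y + α x) - α ((⇑T)^[n] x)) ∧
      ∀ (x : X) (ρ : ℝ),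
        (∀ z : ℝ, Tendsto (fun n : ℕ => liftIter (⇑T) g n x z / n) atTop (𝓝 ρ)) →
        ∀ y : ℝ, Tendsto (fun n : ℕ => liftIter (⇑T) gC n x y / n) atTop (𝓝 ρ) := by
  obtain ⟨hgc, hgproj, hgper⟩ := hg
  have hIter : ∀ (n : ℕ) (x : X) (y : ℝ),
      liftIter (⇑T) gC (n+1) x y
        = liftIter (⇑T) g (n+1) x (y + α x) - α ((⇑T)^[n+1] x) := by
    intro n
    induction n with
    | zero => intro x y; simp [liftIter, hgC]
    | succ n ih =>
      intro x y
      show liftIter (⇑T) gC (n+1) (T x) (gC x y) = _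
      rw [ih (T x) (gC x y), hgC]
      rw [sub_add_cancel, ← Function.iterate_succ_apply]
      rfl
  refine ⟨⟨?_, ?_, ?_⟩, ?_, ?_⟩
  · have : (fun p : X × ℝ => gC p.1 p.2) =
        fun p : X × ℝ => g p.1 (p.2 + α p.1) - α (T p.1) := by
      funext p; rw [hgC]
    rw [this]
    exact (hgc.comp (continuous_fst.prodMk
        (continuous_snd.add (hα.comp continuous_fst)))).sub
      ((hα.comp T.continuous).comp continuous_fst)
  · intro x y
    rw [hgC x y, hC, SL2act_mul, SL2act_mul, rot_proj, ← hgproj,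
      show -(Real.pi * α (T x)) = Real.pi * (-(α (T x))) by ring, rot_proj, sub_eq_add_neg]
  · intro x y
    rw [hgC, hgC, show y + 1 + α x = y + α x + 1 by ring, hgper]
    ring
  · intro x y n hn
    obtain ⟨m, rfl⟩ : ∃ m, n = m + 1 := ⟨n - 1, by omega⟩
    exact hIter m x y
  · intro x ρ hρ y
    obtain ⟨M, hM⟩ := isCompact_univ.exists_bound_of_continuousOn hα.continuousOn
    have h1 : Tendsto (fun n : ℕ => α ((⇑T)^[n] x) / n) atTop (𝓝 0) := by
      have hb : ∀ n : ℕ, ‖α ((⇑T)^[n] x) / n‖ ≤ M / n := by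
        intro n
        rw [norm_div, Real.norm_natCast]
        have hMn : ‖α ((⇑T)^[n] x)‖ ≤ M := by simpa using hM _ (Set.mem_univ _)
        rcases Nat.eq_zero_or_pos n with h0 | h0
        · simp [h0]
        · exact div_le_div_of_nonneg_right hMn (by positivity)
      exact squeeze_zero_norm hb (tendsto_const_div_atTop_nhds_zero_nat M)
    have h2 := (hρ (y + α x)).sub h1
    rw [sub_zero] at h2
    apply h2.congr'
    filter_upwards [eventually_ge_atTop 1] with n hn
    obtain ⟨m, rfl⟩ : ∃ m, n = m + 1 := ⟨n - 1, by omega⟩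
    rw [hIter m x y]
    ring

end
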